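/- Let {X_n}_{n≥N} be a nonnegative integrable process adapted to a filtration {F_n}, satisfying E[X_{n+1} | F_n] ≤ (1−β_n)X_n + b_n almost surely for deterministic sequences 0 ≤ β_n ≤ 1 and b_n ≥ 0. Let (q_n) be a positive deterministic sequence and define γ_n = 1 − (q_{n+1}/q_n)(1−β_n). If (after possibly increasing N) 0 ≤ γ_n ≤ 1, ∑_n γ_n = ∞, and ∑_n q_{n+1} b_n < ∞, then q_n X_n → 0 almost surely. -/

import Mathlib

open MeasureTheory Filter

/-- Weighted Robbins–Siegmund lemma: if a nonnegative adapted integrable process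
satisfies `E[X_{n+1} | F_n] ≤ (1−β_n)X_n + b_n` a.s. for `n ≥ N`, and the weights
`q_n > 0` satisfy `0 ≤ γ_n ≤ 1`, `∑ γ_n = ∞`, `∑ q_{n+1} b_n < ∞`, where
`γ_n = 1 − (q_{n+1}/q_n)(1−β_n)`, then `q_n X_n → 0` a.s. -/
theorem weighted_robbins_siegmund
    {Ω : Type*} {m0 : MeasurableSpace Ω} {μ : Measure Ω} [IsProbabilityMeasure μ]
    (F : Filtration ℕ m0) (X : ℕ → Ω → ℝ) (β b q γ : ℕ → ℝ) (N : ℕ)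
    (hadapted : Adapted F X)
    (hnonneg : ∀ n, ∀ᵐ ω ∂μ, 0 ≤ X n ω)
    (hint : ∀ n, Integrable (X n) μ)
    (hβ0 : ∀ n, 0 ≤ β n) (hβ1 : ∀ n, β n ≤ 1) (hb : ∀ n, 0 ≤ b n)
    (hq : ∀ n, 0 < q n)
    (hγdef : ∀ n, γ n = 1 - (q (n + 1) / q n) * (1 - β n))
    (hdrift : ∀ n, N ≤ n →
      ∀ᵐ ω ∂μ, (μ[X (n + 1) | F n]) ω ≤ (1 - β n) * X n ω + b n)
    (hγ0 : ∀ n, N ≤ n → 0 ≤ γ n) (hγ1 : ∀ n, N ≤ n → γ n ≤ 1)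
    (hγdiv : ¬ Summable (fun n => γ n))
    (hqb : Summable (fun n => q (n + 1) * b n)) :
    ∀ᵐ ω ∂μ, Tendsto (fun n => q n * X n ω) atTop (nhds 0) := by
  classical
  -- the summable error sequence
  set c : ℕ → ℝ := fun m => q (m + 1) * b m with hc
  have hc0 : ∀ m, 0 ≤ c m := fun m => mul_nonneg (hq _).le (hb m)
  have hcs : Summable c := hqb
  have hcs' : ∀ k, Summable fun n => c (n + k) := fun k => (summable_nat_add_iff k).2 hcs
  -- tail sums
  set T : ℕ → ℝ := fun n => ∑' k, c (k + (N + n)) with hT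
  have hT0 : ∀ n, 0 ≤ T n := fun n => tsum_nonneg fun k => hc0 _
  have hTsucc : ∀ n, T n = c (N + n) + T (n + 1) := by
    intro n
    have h1 : (∑' k, c (k + (N + n))) = c (0 + (N + n)) + ∑' k, c ((k + 1) + (N + n)) :=
      Summable.tsum_eq_zero_add (hcs' (N + n))
    have h2 : (∑' k, c ((k + 1) + (N + n))) = ∑' k, c (k + (N + (n + 1))) := by
      apply tsum_congr; intro k; congr 1; omega
    simp only [hT, zero_add] at h1 ⊢
    rw [h1, h2]
  have hTtend : Tendsto T atTop (nhds 0) := by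
    have h := (tendsto_sum_nat_add c).comp (tendsto_add_atTop_nat N)
    refine h.congr fun n => ?_
    exact tsum_congr fun k => by rw [Nat.add_comm N n]
  -- key inequality from γ ≥ 0
  have hkey : ∀ m, N ≤ m → q (m + 1) * (1 - β m) ≤ q m := by
    intro m hm
    have h1 : (q (m + 1) / q m) * (1 - β m) ≤ 1 := by
      have := hγ0 m hm; rw [hγdef m] at this; linarith
    rw [div_mul_eq_mul_div, div_le_one (hq m)] at h1
    linarith
  have hrel : ∀ m, (1 - γ m) * q m = q (m + 1) * (1 - β m) := by
    intro m
    have h0 : q m ≠ 0 := (hq m).ne'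
    rw [hγdef m]
    field_simp
    ring
  -- shifted filtration
  set G : Filtration ℕ m0 :=
    ⟨fun n => F (N + n), fun i j hij => F.mono (by omega), fun n => F.le _⟩ with hG
  -- supermartingale candidate
  set f : ℕ → Ω → ℝ := fun n ω => q (N + n) * X (N + n) ω + T n with hf
  have hintf : ∀ n, Integrable (f n) μ := fun n =>
    ((hint (N + n)).const_mul _).add (integrable_const _)
  have hadp : StronglyAdapted G f := fun n =>
    ((stronglyMeasurable_const.mul (hadapted (N + n)).stronglyMeasurable).add stronglyMeasurable_const)
  have hX0 : ∀ᵐ ω ∂μ, ∀ n, 0 ≤ X n ω := ae_all_iff.2 hnonneg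
  have hcond : ∀ n, μ[f (n + 1) | G n] ≤ᵐ[μ] f n := by
    intro n
    have hce : μ[f (n + 1) | G n] =ᵐ[μ]
        fun ω => q (N + (n + 1)) * (μ[X (N + (n + 1)) | F (N + n)]) ω + T (n + 1) := by
      have h1 : f (n + 1) = (fun ω => q (N + (n + 1)) * X (N + (n + 1)) ω)
          + (fun _ => T (n + 1)) := rfl
      rw [h1]
      refine (condExp_add ((hint _).const_mul _) (integrable_const _) (G n)).trans ?_
      have h2 : μ[(fun ω => q (N + (n + 1)) * X (N + (n + 1)) ω) | G n]
          =ᵐ[μ] fun ω => q (N + (n + 1)) * (μ[X (N + (n + 1)) | G n]) ω := by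
        simpa [Pi.smul_def, smul_eq_mul] using
          condExp_smul (μ := μ) (m := G n) (q (N + (n + 1)) : ℝ) (X (N + (n + 1)))
      rw [condExp_const (G.le n)]
      filter_upwards [h2] with ω h2ω
      simp only [Pi.add_apply]
      rw [h2ω]
    have hdr := hdrift (N + n) (Nat.le_add_right N n)
    filter_upwards [hce, hdr, hX0] with ω hceω hdrω hXω
    rw [hceω]
    have hq1 : (0:ℝ) ≤ q (N + (n + 1)) := (hq _).le
    have step1 : q (N + (n + 1)) * (μ[X (N + (n + 1)) | F (N + n)]) ω
        ≤ q (N + (n + 1)) * ((1 - β (N + n)) * X (N + n) ω + b (N + n)) :=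
      mul_le_mul_of_nonneg_left hdrω hq1
    have step2 : q (N + (n + 1)) * (1 - β (N + n)) * X (N + n) ω
        ≤ q (N + n) * X (N + n) ω :=
      mul_le_mul_of_nonneg_right (hkey (N + n) (Nat.le_add_right N n)) (hXω _)
    have hTs := hTsucc n
    have e1 : q (N + (n + 1)) * ((1 - β (N + n)) * X (N + n) ω + b (N + n))
        = q (N + (n + 1)) * (1 - β (N + n)) * X (N + n) ω + c (N + n) := by
      simp only [hc]
      ring
    simp only [hf]
    linarith [step1, step2, hTs, e1]
  have hsup : Supermartingale f G μ := supermartingale_nat hadp hintf hcond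
  -- nonnegativity of f a.e.
  have hf0 : ∀ᵐ ω ∂μ, ∀ n, 0 ≤ f n ω := by
    filter_upwards [hX0] with ω hXω n
    exact add_nonneg (mul_nonneg (hq _).le (hXω _)) (hT0 n)
  -- L¹ bound
  set R : NNReal := (∫ ω, f 0 ω ∂μ).toNNReal with hR
  have hbdd : ∀ n, eLpNorm (f n) 1 μ ≤ (R : ENNReal) := by
    intro n
    have h1 : eLpNorm (f n) 1 μ = ENNReal.ofReal (∫ ω, f n ω ∂μ) := by
      rw [eLpNorm_one_eq_lintegral_enorm,
        ofReal_integral_eq_lintegral_ofReal (hintf n)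
          (by filter_upwards [hf0] with ω hω using hω n)]
      refine lintegral_congr_ae ?_
      filter_upwards [hf0] with ω hω
      exact Real.enorm_eq_ofReal (hω n)
    have h2 : ∫ ω, f n ω ∂μ ≤ ∫ ω, f 0 ω ∂μ := by
      have := hsup.setIntegral_le (Nat.zero_le n) MeasurableSet.univ
      simpa [Measure.restrict_univ] using this
    rw [h1]
    exact (ENNReal.ofReal_le_ofReal h2).trans (by rw [hR]; simp [ENNReal.ofReal])
  -- a.e. convergence of f
  have hconv : ∀ᵐ ω ∂μ, ∃ l, Tendsto (fun n => f n ω) atTop (nhds l) := by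
    have hneg : ∀ n, eLpNorm ((-f) n) 1 μ ≤ (R : ENNReal) := by
      intro n; rw [show (-f) n = -(f n) from rfl, eLpNorm_neg]; exact hbdd n
    filter_upwards [hsup.neg.exists_ae_tendsto_of_bdd hneg] with ω ⟨l, hl⟩
    exact ⟨-l, by simpa using hl.neg⟩
  -- expectations
  set E : ℕ → ℝ := fun n => ∫ ω, X n ω ∂μ with hE
  have hE0 : ∀ n, 0 ≤ E n := fun n => integral_nonneg_of_ae (hnonneg n)
  have hEstep : ∀ m, N ≤ m → E (m + 1) ≤ (1 - β m) * E m + b m := by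
    intro m hm
    have h1 : ∫ ω, (μ[X (m + 1) | F m]) ω ∂μ = E (m + 1) :=
      integral_condExp (F.le m) (μ := μ) (f := X (m + 1))
    have h2 : ∫ ω, (μ[X (m + 1) | F m]) ω ∂μ
        ≤ ∫ ω, ((1 - β m) * X m ω + b m) ∂μ :=
      integral_mono_ae integrable_condExp
        (((hint m).const_mul _).add (integrable_const _)) (hdrift m hm)
    have h3 : ∫ ω, ((1 - β m) * X m ω + b m) ∂μ = (1 - β m) * E m + b m := by
      rw [integral_add ((hint m).const_mul _) (integrable_const _),
        integral_const_mul, integral_const]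
      simp [hE]
    rw [h1, h3] at h2
    exact h2
  set a : ℕ → ℝ := fun n => q (N + n) * E (N + n) with ha
  have ha0 : ∀ n, 0 ≤ a n := fun n => mul_nonneg (hq _).le (hE0 _)
  have hastep : ∀ n, γ (N + n) * a n ≤ a n - a (n + 1) + c (N + n) := by
    intro n
    have h1 := hEstep (N + n) (Nat.le_add_right N n)
    have h2 : q ((N + n) + 1) * E ((N + n) + 1)
        ≤ q ((N + n) + 1) * ((1 - β (N + n)) * E (N + n) + b (N + n)) :=
      mul_le_mul_of_nonneg_left h1 (hq _).le
    have h3 : q ((N + n) + 1) * (1 - β (N + n)) = q (N + n) - γ (N + n) * q (N + n) := by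
      rw [← hrel (N + n)]; ring
    have e : q ((N + n) + 1) * ((1 - β (N + n)) * E (N + n) + b (N + n))
        = q (N + n) * E (N + n) - γ (N + n) * (q (N + n) * E (N + n)) + c (N + n) := by
      rw [mul_add, ← mul_assoc, h3]
      simp only [hc]
      ring
    have hNn : N + (n + 1) = (N + n) + 1 := rfl
    simp only [ha, hNn]
    linarith [h2, e]
  -- bound on partial sums of γ·a
  set B : ℝ := a 0 + ∑' m, c m with hB
  have hpartial : ∀ M, ∑ n ∈ Finset.range M, γ (N + n) * a n ≤ B := by
    intro M
    have h1 : ∑ n ∈ Finset.range M, γ (N + n) * a n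
        ≤ ∑ n ∈ Finset.range M, (a n - a (n + 1) + c (N + n)) :=
      Finset.sum_le_sum fun n _ => hastep n
    have h2 : ∑ n ∈ Finset.range M, (a n - a (n + 1) + c (N + n))
        = (a 0 - a M) + ∑ n ∈ Finset.range M, c (N + n) := by
      rw [Finset.sum_add_distrib, Finset.sum_range_sub' a M]
    have h3 : ∑ n ∈ Finset.range M, c (N + n) ≤ ∑' m, c m := by
      have h4 : ∑ n ∈ Finset.range M, c (N + n) ≤ ∑' n, c (n + N) := by
        have := Summable.sum_le_tsum (Finset.range M) (fun n _ => hc0 (n + N)) (hcs' N)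
        simpa [add_comm] using this
      have h5 : ∑' n, c (n + N) ≤ ∑' m, c m := by
        have := Summable.sum_add_tsum_nat_add (f := c) N hcs
        have h6 : 0 ≤ ∑ i ∈ Finset.range N, c i :=
          Finset.sum_nonneg fun i _ => hc0 i
        linarith
      linarith
    have := ha0 M
    calc ∑ n ∈ Finset.range M, γ (N + n) * a n
        ≤ (a 0 - a M) + ∑ n ∈ Finset.range M, c (N + n) := by rw [← h2]; exact h1
      _ ≤ a 0 + ∑' m, c m := by linarith
  -- lintegral summability
  set g : ℕ → Ω → ENNReal :=
    fun n ω => ENNReal.ofReal ((γ (N + n) * q (N + n)) * X (N + n) ω) with hg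
  have hgmeas : ∀ n, AEMeasurable (g n) μ :=
    fun n => ENNReal.measurable_ofReal.comp_aemeasurable
      (((hint (N + n)).aestronglyMeasurable.aemeasurable).const_mul _)
  have hγq0 : ∀ n, 0 ≤ γ (N + n) * q (N + n) :=
    fun n => mul_nonneg (hγ0 _ (Nat.le_add_right N n)) (hq _).le
  have hglint : ∀ n, ∫⁻ ω, g n ω ∂μ = ENNReal.ofReal (γ (N + n) * a n) := by
    intro n
    rw [← ofReal_integral_eq_lintegral_ofReal ((hint _).const_mul _)
      (by filter_upwards [hnonneg (N + n)] with ω hω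
          exact mul_nonneg (hγq0 n) hω)]
    rw [integral_const_mul]
    congr 1
    simp only [ha, hE]
    ring
  have hsumlint : ∑' n, ∫⁻ ω, g n ω ∂μ ≤ ENNReal.ofReal B := by
    refine Summable.tsum_le_of_sum_range_le ENNReal.summable fun M => ?_
    have h1 : ∑ n ∈ Finset.range M, ∫⁻ ω, g n ω ∂μ
        = ENNReal.ofReal (∑ n ∈ Finset.range M, γ (N + n) * a n) := by
      rw [ENNReal.ofReal_sum_of_nonneg
        (fun n _ => mul_nonneg (hγ0 _ (Nat.le_add_right N n)) (ha0 n))]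
      exact Finset.sum_congr rfl fun n _ => hglint n
    rw [h1]
    exact ENNReal.ofReal_le_ofReal (hpartial M)
  have hglt : ∀ᵐ ω ∂μ, ∑' n, g n ω < ⊤ := by
    refine ae_lt_top' (AEMeasurable.ennreal_tsum hgmeas) ?_
    rw [lintegral_tsum hgmeas]
    exact ne_top_of_le_ne_top ENNReal.ofReal_ne_top hsumlint
  -- main assembly
  filter_upwards [hconv, hglt, hX0] with ω hconvω hgltω hXω
  obtain ⟨l, hl⟩ := hconvω
  -- q_{N+n} X_{N+n} ω → l
  have hY : Tendsto (fun n => q (N + n) * X (N + n) ω) atTop (nhds l) := by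
    have := hl.sub hTtend
    simpa [hf] using this
  have hsumγY : Summable (fun n => γ (N + n) * (q (N + n) * X (N + n) ω)) := by
    have h1 := ENNReal.summable_toReal hgltω.ne
    refine h1.congr fun n => ?_
    rw [hg]
    simp only
    rw [ENNReal.toReal_ofReal (mul_nonneg (hγq0 n) (hXω _))]
    ring
  have hl0 : 0 ≤ l := ge_of_tendsto' hY fun n => mul_nonneg (hq _).le (hXω _)
  have hlz : l = 0 := by
    by_contra hne
    have hlpos : 0 < l := lt_of_le_of_ne hl0 (Ne.symm hne)
    have hev : ∀ᶠ n in atTop, l / 2 ≤ q (N + n) * X (N + n) ω :=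
      hY.eventually_const_le (by linarith)
    obtain ⟨M, hM⟩ := eventually_atTop.1 hev
    have hsum2 : Summable (fun n => γ (N + (n + M)) * (q (N + (n + M)) * X (N + (n + M)) ω)) :=
      (summable_nat_add_iff M).2 hsumγY
    have hsum3 : Summable (fun n => γ (N + (n + M))) := by
      refine Summable.of_nonneg_of_le (fun n => hγ0 _ (Nat.le_add_right N _)) (fun n => ?_)
        (hsum2.mul_left (2 / l))
      have h1 : l / 2 ≤ q (N + (n + M)) * X (N + (n + M)) ω := hM (n + M) (by omega)
      have h2 : 0 ≤ γ (N + (n + M)) := hγ0 _ (Nat.le_add_right N _)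
      have hl' : l ≠ 0 := hlpos.ne'
      have h4 : γ (N + (n + M)) = (2 / l) * (γ (N + (n + M)) * (l / 2)) := by
        field_simp
      calc γ (N + (n + M)) = (2 / l) * (γ (N + (n + M)) * (l / 2)) := h4
        _ ≤ (2 / l) * (γ (N + (n + M)) * (q (N + (n + M)) * X (N + (n + M)) ω)) := by
            refine mul_le_mul_of_nonneg_left ?_ (by positivity)
            exact mul_le_mul_of_nonneg_left h1 h2
    have hsum4 : Summable γ := by
      have h1 : Summable (fun n => γ (n + (N + M))) := by
        refine hsum3.congr fun n => ?_
        congr 1; omega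
      exact (summable_nat_add_iff (N + M)).1 h1
    exact hγdiv hsum4
  rw [hlz] at hY
  have hfinal : Tendsto (fun n => q (n + N) * X (n + N) ω) atTop (nhds 0) := by
    refine hY.congr fun n => ?_
    congr 2 <;> omega
  exact (tendsto_add_atTop_iff_nat N).1 hfinal
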